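/- arXiv:1202.4044 — 6 statements merged into one kernel-verified Lean document; each statement's English description precedes it below -/
import Mathlib

section
/- For each integer d with 0 ≤ d ≤ D, the set {P ∈ R^{D×D} : P symmetric, 0 ≼ P ≼ I, tr P = d} is the convex hull of the set of D×D orthogonal projection matrices with trace d. -/
open Matrix Finset

/-- 0/1 vectors with `d` ones. -/
private def VSet (D : ℕ) (d : ℕ) : Set (Fin D → ℝ) :=
  {y | (∀ i, y i = 0 ∨ y i = 1) ∧ ∑ i, y i = (d : ℝ)}

private lemma vec_mem_hull_aux (D : ℕ) (n : ℕ) : ∀ (d : ℕ) (x : Fin D → ℝ),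
    (Finset.univ.filter (fun i => x i ≠ 0 ∧ x i ≠ 1)).card ≤ n →
    (∀ i, 0 ≤ x i) → (∀ i, x i ≤ 1) → ∑ i, x i = (d : ℝ) →
    x ∈ convexHull ℝ (VSet D d) := by
  induction n with
  | zero =>
    intro d x hcard h0 h1 hs
    apply subset_convexHull
    refine ⟨fun i => ?_, hs⟩
    by_contra hne
    push_neg at hne
    have : i ∈ Finset.univ.filter (fun i => x i ≠ 0 ∧ x i ≠ 1) := by
      simp [hne.1, hne.2]
    have := Finset.card_pos.mpr ⟨i, this⟩
    omega
  | succ n ih =>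
    intro d x hcard h0 h1 hs
    set F := Finset.univ.filter (fun i => x i ≠ 0 ∧ x i ≠ 1) with hF
    rcases Finset.eq_empty_or_nonempty F with hFe | ⟨i, hi⟩
    · apply subset_convexHull
      refine ⟨fun i => ?_, hs⟩
      by_contra hne
      push_neg at hne
      have hmem : i ∈ F := by simp [hF, hne.1, hne.2]
      rw [hFe] at hmem
      exact absurd hmem (Finset.notMem_empty i)
    -- there is a second fractional index j ≠ i
    have hix : x i ≠ 0 ∧ x i ≠ 1 := by simpa [hF] using hi
    have hex : ∃ j ∈ F, j ≠ i := by
      by_contra hno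
      push_neg at hno
      -- all other coordinates are 0 or 1
      have hall : ∀ k, k ≠ i → (x k = 0 ∨ x k = 1) := by
        intro k hk
        by_contra hne
        push_neg at hne
        exact hk (hno k (by simp [hF, hne.1, hne.2]))
      set S := Finset.univ.erase i with hS
      have hsum : ∑ k ∈ S, x k = ((S.filter (fun k => x k = 1)).card : ℝ) := by
        rw [← Finset.sum_boole]
        refine Finset.sum_congr rfl fun k hk => ?_
        rcases hall k (Finset.ne_of_mem_erase hk) with h | h <;> simp [h]
      have hxi : x i = (d : ℝ) - ((S.filter (fun k => x k = 1)).card : ℝ) := by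
        have : x i + ∑ k ∈ S, x k = (d : ℝ) := by
          rw [hS, Finset.add_sum_erase _ _ (Finset.mem_univ i)]
          exact hs
        linarith [hsum ▸ this]
      have hxi0 : 0 < x i := lt_of_le_of_ne (h0 i) (Ne.symm hix.1)
      have hxi1 : x i < 1 := lt_of_le_of_ne (h1 i) hix.2
      set m := (S.filter (fun k => x k = 1)).card
      have e0 : (0 : ℝ) < (d : ℝ) - (m : ℝ) := by rw [← hxi]; exact hxi0
      have e1 : (d : ℝ) - (m : ℝ) < 1 := by rw [← hxi]; exact hxi1
      have i0 : (0 : ℤ) < (d : ℤ) - (m : ℤ) := by exact_mod_cast e0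
      have i1 : (d : ℤ) - (m : ℤ) < 1 := by exact_mod_cast e1
      omega
    obtain ⟨j, hj, hji⟩ := hex
    have hjx : x j ≠ 0 ∧ x j ≠ 1 := by simpa [hF] using hj
    have hxi0 : 0 < x i := lt_of_le_of_ne (h0 i) (Ne.symm hix.1)
    have hxi1 : x i < 1 := lt_of_le_of_ne (h1 i) hix.2
    have hxj0 : 0 < x j := lt_of_le_of_ne (h0 j) (Ne.symm hjx.1)
    have hxj1 : x j < 1 := lt_of_le_of_ne (h1 j) hjx.2
    set s : ℝ := min (1 - x i) (x j) with hsdef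
    set t : ℝ := min (x i) (1 - x j) with htdef
    have hspos : 0 < s := lt_min (by linarith) hxj0
    have htpos : 0 < t := lt_min hxi0 (by linarith)
    set y : Fin D → ℝ := fun k => if k = i then x i + s else if k = j then x j - s else x k with hy
    set z : Fin D → ℝ := fun k => if k = i then x i - t else if k = j then x j + t else x k with hz
    have hij : i ≠ j := hji.symm ∘ Eq.symm ∘ id ∘ Eq.symm
    -- sums
    have sum_pert : ∀ (c : ℝ), ∑ k, (fun k => if k = i then x i + c else if k = j then x j - c else x k) k = (d : ℝ) := by
      intro c
      have : ∀ k, (if k = i then x i + c else if k = j then x j - c else x k)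
          = x k + (if k = i then c else 0) - (if k = j then c else 0) := by
        intro k
        rcases eq_or_ne k i with rfl | hki
        · simp [hij.symm ∘ Eq.symm, if_neg]
          rw [if_neg (by exact fun h => hij (h ▸ rfl))]
          ring
        · rcases eq_or_ne k j with rfl | hkj
          · simp [hki]
          · simp [hki, hkj]
      simp_rw [this]
      rw [Finset.sum_sub_distrib, Finset.sum_add_distrib]
      simp [Finset.sum_ite_eq', hs]
    have hysum : ∑ k, y k = (d : ℝ) := sum_pert s
    have hzsum : ∑ k, z k = (d : ℝ) := by
      have := sum_pert (-t)
      simp only [hz]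
      rw [← this]
      refine Finset.sum_congr rfl fun k _ => ?_
      rcases eq_or_ne k i with rfl | hki
      · simp <;> ring_nf
      · rcases eq_or_ne k j with rfl | hkj
        · simp [hki] <;> ring_nf
        · simp [hki, hkj]
    -- bounds
    have hy0 : ∀ k, 0 ≤ y k := by
      intro k
      simp only [hy]
      rcases eq_or_ne k i with rfl | hki
      · simp; nlinarith [min_le_left (1 - x k) (x j)]
      · rcases eq_or_ne k j with rfl | hkj
        · simp [hki]; exact min_le_right _ _
        · simp [hki, hkj]; exact h0 k
    have hy1 : ∀ k, y k ≤ 1 := by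
      intro k
      simp only [hy]
      rcases eq_or_ne k i with rfl | hki
      · simp; linarith [min_le_left (1 - x k) (x j)]
      · rcases eq_or_ne k j with rfl | hkj
        · simp [hki]; linarith [hspos.le]
        · simp [hki, hkj]; exact h1 k
    have hz0 : ∀ k, 0 ≤ z k := by
      intro k
      simp only [hz]
      rcases eq_or_ne k i with rfl | hki
      · simp; linarith [min_le_left (x k) (1 - x j)]
      · rcases eq_or_ne k j with rfl | hkj
        · simp [hki]; linarith [htpos.le]
        · simp [hki, hkj]; exact h0 k
    have hz1 : ∀ k, z k ≤ 1 := by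
      intro k
      simp only [hz]
      rcases eq_or_ne k i with rfl | hki
      · simp; linarith [htpos.le]
      · rcases eq_or_ne k j with rfl | hkj
        · simp [hki]; nlinarith [min_le_right (x i) (1 - x k)]
        · simp [hki, hkj]; exact h1 k
    -- fractional sets shrink
    have hysub : Finset.univ.filter (fun k => y k ≠ 0 ∧ y k ≠ 1) ⊆ F.erase (if 1 - x i ≤ x j then i else j) := by
      intro k hk
      simp only [Finset.mem_filter, Finset.mem_univ, true_and] at hk
      rcases le_or_gt (1 - x i) (x j) with hc | hc
      · have hsi : s = 1 - x i := min_eq_left hc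
        rw [if_pos hc]
        refine Finset.mem_erase.mpr ⟨?_, ?_⟩
        · rintro rfl
          exact hk.2 (by simp [hy, hsi] <;> ring)
        · simp only [hF, Finset.mem_filter, Finset.mem_univ, true_and]
          rcases eq_or_ne k i with rfl | hki
          · exact hix
          · rcases eq_or_ne k j with rfl | hkj
            · exact hjx
            · simpa [hy, hki, hkj] using hk
      · have hsj : s = x j := min_eq_right hc.le
        rw [if_neg (not_le.mpr hc)]
        refine Finset.mem_erase.mpr ⟨?_, ?_⟩
        · rintro rfl
          exact hk.1 (by simp [hy, hij.symm, hsj])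
        · simp only [hF, Finset.mem_filter, Finset.mem_univ, true_and]
          rcases eq_or_ne k i with rfl | hki
          · exact hix
          · rcases eq_or_ne k j with rfl | hkj
            · exact hjx
            · simpa [hy, hki, hkj] using hk
    have hzsub : Finset.univ.filter (fun k => z k ≠ 0 ∧ z k ≠ 1) ⊆ F.erase (if x i ≤ 1 - x j then i else j) := by
      intro k hk
      simp only [Finset.mem_filter, Finset.mem_univ, true_and] at hk
      rcases le_or_gt (x i) (1 - x j) with hc | hc
      · have hti : t = x i := min_eq_left hc
        rw [if_pos hc]
        refine Finset.mem_erase.mpr ⟨?_, ?_⟩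
        · rintro rfl
          exact hk.1 (by simp [hz, hti])
        · simp only [hF, Finset.mem_filter, Finset.mem_univ, true_and]
          rcases eq_or_ne k i with rfl | hki
          · exact hix
          · rcases eq_or_ne k j with rfl | hkj
            · exact hjx
            · simpa [hz, hki, hkj] using hk
      · have htj : t = 1 - x j := min_eq_right hc.le
        rw [if_neg (not_le.mpr hc)]
        refine Finset.mem_erase.mpr ⟨?_, ?_⟩
        · rintro rfl
          exact hk.2 (by simp [hz, hij.symm, htj] <;> ring)
        · simp only [hF, Finset.mem_filter, Finset.mem_univ, true_and]
          rcases eq_or_ne k i with rfl | hki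
          · exact hix
          · rcases eq_or_ne k j with rfl | hkj
            · exact hjx
            · simpa [hz, hki, hkj] using hk
    have hiF : i ∈ F := hi
    have hjF : j ∈ F := hj
    have hycard : (Finset.univ.filter (fun k => y k ≠ 0 ∧ y k ≠ 1)).card ≤ n := by
      have h1' := Finset.card_le_card hysub
      have h2' : (F.erase (if 1 - x i ≤ x j then i else j)).card = F.card - 1 :=
        Finset.card_erase_of_mem (by split <;> assumption)
      omega
    have hzcard : (Finset.univ.filter (fun k => z k ≠ 0 ∧ z k ≠ 1)).card ≤ n := by
      have h1' := Finset.card_le_card hzsub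
      have h2' : (F.erase (if x i ≤ 1 - x j then i else j)).card = F.card - 1 :=
        Finset.card_erase_of_mem (by split <;> assumption)
      omega
    have hyhull := ih d y hycard hy0 hy1 hysum
    have hzhull := ih d z hzcard hz0 hz1 hzsum
    -- x is a convex combination of y and z
    have hst : 0 < s + t := by linarith
    have hcomb : x = (t / (s + t)) • y + (s / (s + t)) • z := by
      funext k
      simp only [Pi.add_apply, Pi.smul_apply, smul_eq_mul, hy, hz]
      rcases eq_or_ne k i with rfl | hki
      · simp only [if_pos rfl, ↓reduceIte]
        field_simp
        ring
      · rcases eq_or_ne k j with rfl | hkj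
        · simp only [if_neg hki, if_pos rfl, ↓reduceIte]
          field_simp
          ring
        · simp only [if_neg hki, if_neg hkj]
          field_simp
          ring
    rw [hcomb]
    exact (convex_convexHull ℝ (VSet D d)) hyhull hzhull
      (div_nonneg htpos.le hst.le) (div_nonneg hspos.le hst.le)
      (by field_simp <;> ring)

private lemma vec_mem_hull {D : ℕ} {d : ℕ} (x : Fin D → ℝ)
    (h0 : ∀ i, 0 ≤ x i) (h1 : ∀ i, x i ≤ 1) (hs : ∑ i, x i = (d : ℝ)) :
    x ∈ convexHull ℝ (VSet D d) :=
  vec_mem_hull_aux D _ d x le_rfl h0 h1 hs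

private lemma psd_smul {n : ℕ} {A : Matrix (Fin n) (Fin n) ℝ} (hA : A.PosSemidef)
    {c : ℝ} (hc : 0 ≤ c) : (c • A).PosSemidef := by
  refine Matrix.PosSemidef.of_dotProduct_mulVec_nonneg ?_ fun x => ?_
  · show (c • A)ᴴ = c • A
    rw [Matrix.conjTranspose_smul, hA.1.eq, star_trivial]
  · rw [Matrix.smul_mulVec, dotProduct_smul, smul_eq_mul]
    exact mul_nonneg hc (hA.dotProduct_mulVec_nonneg x)

/-- For each integer `d` with `0 ≤ d ≤ D`, the set of symmetric
`D × D` real matrices `P` with `0 ≼ P ≼ I` and `tr P = d` is the convex hull of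
the set of `D × D` orthogonal projection matrices (symmetric idempotents) with
trace `d`. -/
theorem reaper_constraint_set_is_convex_hull_of_orthoprojectors
    (D d : ℕ) (hd : d ≤ D) :
    {P : Matrix (Fin D) (Fin D) ℝ |
        P.PosSemidef ∧ (1 - P).PosSemidef ∧ P.trace = (d : ℝ)} =
      convexHull ℝ
        {P : Matrix (Fin D) (Fin D) ℝ |
            P.IsSymm ∧ P * P = P ∧ P.trace = (d : ℝ)} := by
  apply Set.Subset.antisymm
  · -- hard direction
    rintro P ⟨hpsd, h1psd, htr⟩
    have hP : P.IsHermitian := hpsd.1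
    set U : Matrix (Fin D) (Fin D) ℝ := (hP.eigenvectorUnitary : Matrix (Fin D) (Fin D) ℝ) with hU
    have hUU : U * star U = 1 := (Matrix.mem_unitaryGroup_iff).mp hP.eigenvectorUnitary.2
    have hUU' : star U * U = 1 := (Matrix.mem_unitaryGroup_iff').mp hP.eigenvectorUnitary.2
    set lam : Fin D → ℝ := hP.eigenvalues with hlam
    have hspec : P = U * Matrix.diagonal lam * star U := by
      have := hP.spectral_theorem
      simpa [RCLike.ofReal_real_eq_id] using this
    -- eigenvalue bounds
    have hl0 : ∀ i, 0 ≤ lam i := fun i => hpsd.eigenvalues_nonneg i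
    have hl1 : ∀ i, lam i ≤ 1 := by
      intro i
      set v : Fin D → ℝ := ⇑(hP.eigenvectorBasis i) with hv
      have hvnz : v ≠ 0 := by
        intro h
        exact hP.eigenvectorBasis.orthonormal.ne_zero i (by ext k; exact congrFun h k)
      have hvv : 0 < dotProduct (star v) v := by
        have hnn : ∀ k ∈ Finset.univ, 0 ≤ star (v k) * v k := fun k _ => mul_self_nonneg (v k)
        obtain ⟨k, hk⟩ := Function.ne_iff.mp hvnz
        refine Finset.sum_pos' hnn ⟨k, Finset.mem_univ k, ?_⟩
        have hk' : v k ≠ 0 := by simpa using hk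
        simpa using mul_self_pos.mpr hk'
      have heig : P *ᵥ v = lam i • v := hP.mulVec_eigenvectorBasis i
      have h := h1psd.dotProduct_mulVec_nonneg v
      rw [Matrix.sub_mulVec, Matrix.one_mulVec, heig, dotProduct_sub,
        dotProduct_smul] at h
      simp only [smul_eq_mul] at h
      nlinarith
    have htr' : ∑ i, lam i = (d : ℝ) := by
      have : P.trace = ∑ i, lam i := by
        rw [hspec, Matrix.trace_mul_cycle, hUU', one_mul, Matrix.trace_diagonal]
      rw [← this, htr]
    -- the conjugation linear map
    let L : (Fin D → ℝ) →ₗ[ℝ] Matrix (Fin D) (Fin D) ℝ :=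
      { toFun := fun x => U * Matrix.diagonal x * star U
        map_add' := fun a b => by
          show U * Matrix.diagonal (a + b) * star U = U * Matrix.diagonal a * star U + U * Matrix.diagonal b * star U
          have : Matrix.diagonal (a + b) = Matrix.diagonal a + Matrix.diagonal b := by
            rw [Matrix.diagonal_add]; rfl
          rw [this, Matrix.mul_add, Matrix.add_mul]
        map_smul' := fun c a => by
          dsimp only [RingHom.id_apply]
          rw [Matrix.diagonal_smul, Matrix.mul_smul, Matrix.smul_mul] }
    have hPL : P = L lam := hspec
    have hmem := vec_mem_hull (D := D) (d := d) lam hl0 hl1 htr'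
    have himg : L '' (convexHull ℝ (VSet D d)) = convexHull ℝ (L '' (VSet D d)) :=
      L.image_convexHull _
    have hPmem : P ∈ convexHull ℝ (L '' (VSet D d)) := by
      rw [← himg]; exact ⟨lam, hmem, hPL.symm⟩
    refine convexHull_mono ?_ hPmem
    rintro Q ⟨y, ⟨hy01, hysum⟩, rfl⟩
    have hfun : (fun i => y i * y i) = y := funext fun k => by
      rcases hy01 k with h | h <;> rw [h] <;> ring
    have hyy : Matrix.diagonal y * Matrix.diagonal y = Matrix.diagonal y := by
      rw [Matrix.diagonal_mul_diagonal]
      exact congrArg Matrix.diagonal hfun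
    refine ⟨?_, ?_, ?_⟩
    · -- symmetric
      show (L y).IsSymm
      have hLy : L y = U * Matrix.diagonal y * star U := rfl
      rw [Matrix.IsSymm, ← Matrix.conjTranspose_eq_transpose_of_trivial, hLy,
        Matrix.star_eq_conjTranspose, Matrix.conjTranspose_mul, Matrix.conjTranspose_mul,
        Matrix.conjTranspose_conjTranspose, Matrix.diagonal_conjTranspose, star_trivial,
        mul_assoc]
    · show L y * L y = L y
      show (U * Matrix.diagonal y * star U) * (U * Matrix.diagonal y * star U)
          = U * Matrix.diagonal y * star U
      have e1 : star U * (U * (Matrix.diagonal y * star U)) = Matrix.diagonal y * star U := by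
        rw [← mul_assoc, hUU', one_mul]
      calc (U * Matrix.diagonal y * star U) * (U * Matrix.diagonal y * star U)
          = U * (Matrix.diagonal y * (star U * (U * (Matrix.diagonal y * star U)))) := by
            simp only [mul_assoc]
        _ = U * (Matrix.diagonal y * (Matrix.diagonal y * star U)) := by rw [e1]
        _ = U * (Matrix.diagonal y * Matrix.diagonal y * star U) := by rw [← mul_assoc (Matrix.diagonal y)]
        _ = U * Matrix.diagonal y * star U := by rw [hyy, ← mul_assoc]
    · show (L y).trace = (d : ℝ)
      simp only [L, LinearMap.coe_mk, AddHom.coe_mk]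
      rw [Matrix.trace_mul_cycle, hUU', one_mul, Matrix.trace_diagonal, hysum]
  · -- easy direction: hull ⊆ constraint set
    apply convexHull_min
    · rintro P ⟨hsym, hidem, htr⟩
      have hherm : P.IsHermitian := by
        rwa [Matrix.IsHermitian, Matrix.conjTranspose_eq_transpose_of_trivial]
      have hPP : Pᴴ * P = P := by
        rw [hherm.eq, hidem]
      refine ⟨?_, ?_, htr⟩
      · rw [← hPP]; exact Matrix.posSemidef_conjTranspose_mul_self P
      · have h1idem : (1 - P) * (1 - P) = 1 - P := by
          rw [Matrix.mul_sub, Matrix.sub_mul, Matrix.sub_mul, hidem]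
          simp
        have h1herm : (1 - P).IsHermitian := Matrix.IsHermitian.sub Matrix.isHermitian_one hherm
        have hkey : (1 - P)ᴴ * (1 - P) = 1 - P := by rw [h1herm.eq, h1idem]
        rw [← hkey]
        exact Matrix.posSemidef_conjTranspose_mul_self (1 - P)
    · -- convexity
      rintro A ⟨hA1, hA2, hA3⟩ B ⟨hB1, hB2, hB3⟩ a b ha hb hab
      refine ⟨?_, ?_, ?_⟩
      · exact Matrix.PosSemidef.add (psd_smul hA1 ha) (psd_smul hB1 hb)
      · have h1 : a • (1 : Matrix (Fin D) (Fin D) ℝ) + b • 1 = 1 := by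
          rw [← add_smul, hab, one_smul]
        have key : (1 : Matrix (Fin D) (Fin D) ℝ) - (a • A + b • B)
            = a • (1 - A) + b • (1 - B) := by
          nth_rewrite 1 [← h1]
          rw [smul_sub, smul_sub]
          abel
        rw [key]
        exact Matrix.PosSemidef.add (psd_smul hA2 ha) (psd_smul hB2 hb)
      · rw [Matrix.trace_add, Matrix.trace_smul, Matrix.trace_smul, hA3, hB3]
        simp only [smul_eq_mul]
        rw [← add_mul, hab, one_mul]
end

section
/- Let Π_L be the orthoprojector onto a subspace L of R^D, and let Δ be a symmetric matrix with 0 ≼ Π_L + Δ ≼ I, tr Δ = 0, and Π_{L⊥} Δ Π_L ≠ 0. Then tr(Π_{L⊥} Δ Π_{L⊥}) = −tr(Π_L Δ Π_L) > 0. -/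
open Matrix

lemma psd_exists_sqrt_aux {n : Type*} [Fintype n] [DecidableEq n]
    {N : Matrix n n ℝ} (hN : N.PosSemidef) : ∃ S : Matrix n n ℝ, Sᴴ = S ∧ S * S = N := by
  open scoped MatrixOrder in
  exact ⟨CFC.sqrt N, (CFC.sqrt_nonneg N).posSemidef.1, CFC.sqrt_mul_sqrt_self N hN.nonneg⟩

lemma psd_eq_conjTranspose_mul_self_aux {n : Type*} [Fintype n] [DecidableEq n]
    {N : Matrix n n ℝ} (hN : N.PosSemidef) : ∃ B : Matrix n n ℝ, N = Bᴴ * B := by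
  obtain ⟨S, hS, hSS⟩ := psd_exists_sqrt_aux hN
  exact ⟨S, by rw [hS, hSS]⟩

lemma psd_trace_nonneg {n : Type*} [Fintype n] [DecidableEq n]
    {N : Matrix n n ℝ} (hN : N.PosSemidef) : 0 ≤ N.trace := by
  obtain ⟨B, rfl⟩ := psd_eq_conjTranspose_mul_self_aux hN
  have : (Bᴴ * B).trace = ∑ j, ∑ i, B i j * B i j := by
    simp [Matrix.trace, Matrix.mul_apply, Matrix.diag]
  rw [this]
  exact Finset.sum_nonneg fun j _ =>
    Finset.sum_nonneg fun i _ => mul_self_nonneg _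

lemma psd_trace_eq_zero {n : Type*} [Fintype n] [DecidableEq n]
    {N : Matrix n n ℝ} (hN : N.PosSemidef) (h : N.trace = 0) : N = 0 := by
  obtain ⟨B, rfl⟩ := psd_eq_conjTranspose_mul_self_aux hN
  suffices hB : B = 0 by simp [hB]
  have h' : ∑ j, ∑ i, B i j * B i j = 0 := by
    have : (Bᴴ * B).trace = ∑ j, ∑ i, B i j * B i j := by
      simp [Matrix.trace, Matrix.mul_apply, Matrix.diag]
    rw [← this, h]
  ext i j
  have h1 := (Finset.sum_eq_zero_iff_of_nonneg (fun j _ =>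
    Finset.sum_nonneg fun i _ => mul_self_nonneg (B i j))).mp h' j (Finset.mem_univ j)
  have h2 := (Finset.sum_eq_zero_iff_of_nonneg (fun i _ =>
    mul_self_nonneg (B i j))).mp h1 i (Finset.mem_univ i)
  simpa [mul_self_eq_zero] using h2

/-- With `Pr` the orthoprojector onto a subspace `L ⊆ ℝ^D` and `Δ`
symmetric with `0 ≼ Pr + Δ ≼ I`, `tr Δ = 0`, and `(I − Pr) Δ Pr ≠ 0`, one has
`tr((I − Pr) Δ (I − Pr)) = − tr(Pr Δ Pr) > 0`. -/
theorem feasible_perturbation_trace_positive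
    (D : ℕ) (Pr Δ : Matrix (Fin D) (Fin D) ℝ)
    (hProj : Pr.IsSymm ∧ Pr * Pr = Pr)
    (hΔsymm : Δ.IsSymm)
    (hfeas₁ : (Pr + Δ).PosSemidef)
    (hfeas₂ : (1 - (Pr + Δ)).PosSemidef)
    (htr : Δ.trace = 0)
    (hΔ₂ : (1 - Pr) * Δ * Pr ≠ 0) :
    ((1 - Pr) * Δ * (1 - Pr)).trace = -(Pr * Δ * Pr).trace ∧
    0 < ((1 - Pr) * Δ * (1 - Pr)).trace := by
  obtain ⟨hPs, hPi⟩ := hProj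
  set Q : Matrix (Fin D) (Fin D) ℝ := 1 - Pr with hQdef
  set M : Matrix (Fin D) (Fin D) ℝ := Pr + Δ with hMdef
  have hQ2 : Q * Q = Q := by
    simp only [hQdef, sub_mul, mul_sub, one_mul, mul_one, hPi]
    abel
  have hQP : Q * Pr = 0 := by
    simp [hQdef, sub_mul, hPi]
  have hPQ : Pr * Q = 0 := by
    simp [hQdef, mul_sub, hPi]
  have hPH : Prᴴ = Pr := by
    ext i j
    simp [Matrix.conjTranspose_apply, hPs.apply]
  have hQH : Qᴴ = Q := by
    simp [hQdef, Matrix.conjTranspose_sub, hPH, hPs.eq]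
  -- trace equality
  have heq : ((1 - Pr) * Δ * (1 - Pr)).trace = -(Pr * Δ * Pr).trace := by
    have t1 : (Q * Δ * Q).trace = (Q * Δ).trace := by
      rw [Matrix.trace_mul_cycle, hQ2]
    have t2 : (Pr * Δ * Pr).trace = (Pr * Δ).trace := by
      rw [Matrix.trace_mul_cycle, hPi]
    have t3 : (Q * Δ).trace = -(Pr * Δ).trace := by
      have : Q * Δ = Δ - Pr * Δ := by simp [hQdef, sub_mul]
      rw [this, Matrix.trace_sub, Matrix.trace_mul_comm, htr, Matrix.trace_mul_comm]
      ring
    show (Q * Δ * Q).trace = -(Pr * Δ * Pr).trace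
    rw [t1, t2, t3]
  refine ⟨heq, ?_⟩
  -- Q M Q = Q Δ Q is PSD
  have hQMQ : Q * M * Q = Q * Δ * Q := by
    simp [hMdef, mul_add, add_mul, Matrix.mul_assoc, hQP]
  have hpsd : (Q * Δ * Q).PosSemidef := by
    rw [← hQMQ]
    have := hfeas₁.mul_mul_conjTranspose_same Q
    rwa [hQH] at this
  have hnonneg : 0 ≤ (Q * Δ * Q).trace := psd_trace_nonneg hpsd
  rcases lt_or_eq_of_le hnonneg with hlt | hzero
  · exact hlt
  -- trace zero case: derive contradiction
  exfalso
  have hzero' : Q * Δ * Q = 0 := psd_trace_eq_zero hpsd hzero.symm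
  have hQMQ0 : Q * M * Q = 0 := by rw [hQMQ, hzero']
  obtain ⟨S, hSH, hSS⟩ := psd_exists_sqrt_aux hfeas₁
  have hSQ : S * Q = 0 := by
    have : (S * Q)ᴴ * (S * Q) = 0 := by
      rw [Matrix.conjTranspose_mul, hSH, hQH]
      calc Q * S * (S * Q) = Q * (S * S) * Q := by
            rw [Matrix.mul_assoc, Matrix.mul_assoc, Matrix.mul_assoc]
          _ = 0 := by rw [hSS]; exact hQMQ0
    exact Matrix.conjTranspose_mul_self_eq_zero.mp this
  have hMQ : M * Q = 0 := by
    rw [← hSS, Matrix.mul_assoc, hSQ, Matrix.mul_zero]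
  have hQM : Q * M = 0 := by
    have hMH : Mᴴ = M := hfeas₁.1
    have : (M * Q)ᴴ = 0 := by rw [hMQ]; simp
    rwa [Matrix.conjTranspose_mul, hMH, hQH] at this
  apply hΔ₂
  have : Q * Δ * Pr = Q * M * Pr - Q * Pr * Pr := by
    simp [hMdef, mul_add, add_mul, Matrix.mul_assoc]
  rw [this, hQM, hQP]
  simp
end

section
/- Let L be a d-dimensional subspace of R^D and X_in a finite multiset of vectors in L. Then the infimum over positive semidefinite symmetric matrices M with M = Π_L M Π_L and tr M = 1 of Σ_{x ∈ X_in} ‖M x‖ is at least (1/√d) · inf over unit vectors u ∈ L of Σ_{x ∈ X_in} |⟨u, x⟩|. -/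
/-- The Euclidean norm of a vector in `ℝ^D`. -/
noncomputable def euclNorm {D : ℕ} (x : Fin D → ℝ) : ℝ :=
  Real.sqrt (∑ i, x i ^ 2)

private lemma multiset_sum_map_finsetSum {α ι : Type*} (s : Multiset α) (t : Finset ι)
    (f : ι → α → ℝ) : (s.map fun x => ∑ i ∈ t, f i x).sum = ∑ i ∈ t, (s.map (f i)).sum := by
  induction s using Multiset.induction_on with
  | empty => simp
  | cons a s ih => simp [ih, Finset.sum_add_distrib]

open Matrix in
private lemma dot_mulVec_symm {D : ℕ} {M : Matrix (Fin D) (Fin D) ℝ} (hs : M.IsSymm)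
    (u x : Fin D → ℝ) : u ⬝ᵥ (M *ᵥ x) = (M *ᵥ u) ⬝ᵥ x := by
  rw [dotProduct_mulVec, ← Matrix.mulVec_transpose, hs.eq]

open Matrix in
private lemma parseval_dot {D : ℕ} (b : OrthonormalBasis (Fin D) ℝ (EuclideanSpace ℝ (Fin D)))
    (y : Fin D → ℝ) : ∑ i, (⇑(b i) ⬝ᵥ y) ^ 2 = y ⬝ᵥ y := by
  have h := b.sum_inner_mul_inner ((WithLp.equiv 2 _).symm y) ((WithLp.equiv 2 _).symm y)
  simp only [PiLp.inner_apply, RCLike.inner_apply, conj_trivial] at h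
  simp only [dotProduct, sq, WithLp.equiv_symm_apply, WithLp.ofLp_toLp] at h ⊢
  rw [← h]
  refine Finset.sum_congr rfl fun i _ => ?_
  rw [show (∑ j, y j * (b i) j) = (∑ j, (b i) j * y j) from
    Finset.sum_congr rfl fun j _ => mul_comm _ _]

open Matrix in
private lemma onb_dot_self {D : ℕ} (b : OrthonormalBasis (Fin D) ℝ (EuclideanSpace ℝ (Fin D)))
    (i : Fin D) : ⇑(b i) ⬝ᵥ ⇑(b i) = 1 := by
  have h2 : @inner ℝ _ _ (b i) (b i) = (1:ℝ) := by
    rw [real_inner_self_eq_norm_sq, b.orthonormal.1 i]; norm_num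
  rw [PiLp.inner_apply] at h2
  simpa [RCLike.inner_apply, dotProduct, sq] using h2

open Matrix in
private lemma trace_conj_onb {D : ℕ} {M : Matrix (Fin D) (Fin D) ℝ} (hM : M.IsHermitian)
    (Pr : Matrix (Fin D) (Fin D) ℝ) :
    ∑ i, ⇑(hM.eigenvectorBasis i) ⬝ᵥ (Pr *ᵥ ⇑(hM.eigenvectorBasis i)) = Pr.trace := by
  have hUU : (hM.eigenvectorUnitary : Matrix (Fin D) (Fin D) ℝ) *
      star (hM.eigenvectorUnitary : Matrix (Fin D) (Fin D) ℝ) = 1 :=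
    Unitary.mul_star_self_of_mem (hM.eigenvectorUnitary).2
  have h1 : (star (hM.eigenvectorUnitary : Matrix (Fin D) (Fin D) ℝ) * Pr *
      (hM.eigenvectorUnitary : Matrix (Fin D) (Fin D) ℝ)).trace = Pr.trace := by
    rw [Matrix.trace_mul_cycle, hUU, one_mul]
  rw [← h1, Matrix.trace]
  refine Finset.sum_congr rfl fun i _ => ?_
  simp only [Matrix.diag_apply, Matrix.mul_apply, Matrix.star_apply, star_trivial,
    Matrix.mulVec, dotProduct, Matrix.IsHermitian.eigenvectorUnitary_apply, Finset.sum_mul,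
    Finset.mul_sum]
  rw [Finset.sum_comm]
  exact Finset.sum_congr rfl fun j _ => Finset.sum_congr rfl fun k _ => by ring

open Matrix in
private lemma trace_eq_sum_eigenvalues {D : ℕ} {M : Matrix (Fin D) (Fin D) ℝ}
    (hM : M.IsHermitian) : M.trace = ∑ i, hM.eigenvalues i := by
  have hUU : star (hM.eigenvectorUnitary : Matrix (Fin D) (Fin D) ℝ) *
      (hM.eigenvectorUnitary : Matrix (Fin D) (Fin D) ℝ) = 1 :=
    Unitary.star_mul_self_of_mem (hM.eigenvectorUnitary).2
  calc M.trace = ((hM.eigenvectorUnitary : Matrix (Fin D) (Fin D) ℝ) *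
      diagonal (RCLike.ofReal ∘ hM.eigenvalues) *
      (star (hM.eigenvectorUnitary : Matrix (Fin D) (Fin D) ℝ))).trace := by
        exact congrArg Matrix.trace hM.spectral_theorem
    _ = (diagonal (RCLike.ofReal ∘ hM.eigenvalues) : Matrix (Fin D) (Fin D) ℝ).trace := by
        rw [Matrix.trace_mul_cycle, hUU, one_mul]
    _ = ∑ i, hM.eigenvalues i := by simp [Matrix.trace_diagonal]

open Matrix

/-- Let `L` be a `d`-dimensional subspace of `ℝ^D` (with
orthoprojector `Pr`, `d ≥ 1`) and `Xin` a finite multiset of vectors in `L`.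
Then the infimum over positive semidefinite symmetric matrices `M` with
`M = Pr M Pr` and `tr M = 1` of `Σ_{x ∈ Xin} ‖M x‖` is at least
`(1/√d) ·` the infimum over unit vectors `u ∈ L` of `Σ_{x ∈ Xin} |⟨u, x⟩|`. -/
theorem inf_compressed_ge_inv_sqrt_dim_mul_permeance
    (D d : ℕ) (hd : 1 ≤ d) (Pr : Matrix (Fin D) (Fin D) ℝ)
    (hProj : Pr.IsSymm ∧ Pr * Pr = Pr) (hdim : Pr.trace = (d : ℝ))
    (Xin : Multiset (Fin D → ℝ)) (hXin : ∀ x ∈ Xin, Pr.mulVec x = x) :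
    sInf {r : ℝ | ∃ M : Matrix (Fin D) (Fin D) ℝ, M.IsSymm ∧ M.PosSemidef ∧
          M = Pr * M * Pr ∧ M.trace = 1 ∧
          r = (Xin.map fun x => euclNorm (M.mulVec x)).sum}
      ≥
    (1 / Real.sqrt d) *
      sInf {r : ℝ | ∃ u : Fin D → ℝ, euclNorm u = 1 ∧ Pr.mulVec u = u ∧
            r = (Xin.map fun x => |∑ i, u i * x i|).sum} := by
  classical
  obtain ⟨hPrSymm, hPrIdem⟩ := hProj
  set B := {r : ℝ | ∃ u : Fin D → ℝ, euclNorm u = 1 ∧ Pr.mulVec u = u ∧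
            r = (Xin.map fun x => |∑ i, u i * x i|).sum} with hBdef
  have hBnn : ∀ r ∈ B, 0 ≤ r := by
    rintro r ⟨u, -, -, rfl⟩
    refine Multiset.sum_nonneg ?_
    intro z hz
    rcases Multiset.mem_map.1 hz with ⟨x, -, rfl⟩
    positivity
  have hBdd : BddBelow B := ⟨0, fun r hr => hBnn r hr⟩
  have hBInf_nn : 0 ≤ sInf B := Real.sInf_nonneg hBnn
  have hdpos : (0:ℝ) < d := by exact_mod_cast hd
  have hs_pos : 0 < Real.sqrt d := Real.sqrt_pos.2 hdpos
  -- the matrix set is nonempty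
  have hPrPSD : Pr.PosSemidef := by
    have h : Pr = Prᴴ * Pr := by
      rw [Matrix.conjTranspose_eq_transpose_of_trivial, hPrSymm.eq, hPrIdem]

    rw [h]
    exact Matrix.posSemidef_conjTranspose_mul_self Pr
  have hAne : {r : ℝ | ∃ M : Matrix (Fin D) (Fin D) ℝ, M.IsSymm ∧ M.PosSemidef ∧
          M = Pr * M * Pr ∧ M.trace = 1 ∧
          r = (Xin.map fun x => euclNorm (M.mulVec x)).sum}.Nonempty := by
    refine ⟨_, (d:ℝ)⁻¹ • Pr, ?_, ⟨?_, fun x => ?_⟩, ?_, ?_, rfl⟩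
    · unfold Matrix.IsSymm
      rw [Matrix.transpose_smul, hPrSymm.eq]
    · unfold Matrix.IsHermitian
      rw [Matrix.conjTranspose_smul, hPrPSD.1.eq]; simp
    · exact (hPrPSD.smul (by positivity : (0:ℝ) ≤ (d:ℝ)⁻¹)).2 x
    · rw [Matrix.mul_smul, Matrix.smul_mul, hPrIdem, hPrIdem]
    · rw [Matrix.trace_smul, hdim, smul_eq_mul, inv_mul_cancel₀ (ne_of_gt hdpos)]
  rw [ge_iff_le]
  apply le_csInf hAne
  rintro r ⟨M, hMsymm, hMpsd, hMP, hMtr, rfl⟩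
  have hM : M.IsHermitian := hMpsd.1
  set b := hM.eigenvectorBasis with hbdef
  set ev := hM.eigenvalues with hevdef
  have hmvb : ∀ i, M *ᵥ ⇑(b i) = ev i • ⇑(b i) := fun i => hM.mulVec_eigenvectorBasis i
  have hev0 : ∀ i, 0 ≤ ev i := fun i => hMpsd.eigenvalues_nonneg i
  have hevsum : ∑ i, ev i = 1 := by rw [← trace_eq_sum_eigenvalues hM, hMtr]
  have hPrM : Pr * M = M := by
    conv_lhs => rw [hMP]
    conv_rhs => rw [hMP]
    simp only [← mul_assoc, hPrIdem]
  have hbL : ∀ i, ev i ≠ 0 → Pr *ᵥ ⇑(b i) = ⇑(b i) := by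
    intro i hi
    have h1 : Pr *ᵥ (M *ᵥ ⇑(b i)) = M *ᵥ ⇑(b i) := by
      rw [Matrix.mulVec_mulVec, hPrM]
    rw [hmvb i, Matrix.mulVec_smul] at h1
    exact smul_right_injective (Fin D → ℝ) hi h1
  have hbunit : ∀ i, ⇑(b i) ⬝ᵥ ⇑(b i) = 1 := fun i => onb_dot_self b i
  -- the weights c i
  set c : Fin D → ℝ := fun i => ⇑(b i) ⬝ᵥ (Pr *ᵥ ⇑(b i)) with hcdef
  have hcsum : ∑ i, c i = (d : ℝ) := by rw [← hdim]; exact trace_conj_onb hM Pr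
  have hc_eq : ∀ i, c i = (Pr *ᵥ ⇑(b i)) ⬝ᵥ (Pr *ᵥ ⇑(b i)) := by
    intro i
    calc c i = ⇑(b i) ⬝ᵥ ((Pr * Pr) *ᵥ ⇑(b i)) := by rw [hPrIdem]
      _ = ⇑(b i) ⬝ᵥ (Pr *ᵥ (Pr *ᵥ ⇑(b i))) := by rw [← Matrix.mulVec_mulVec]
      _ = (Pr *ᵥ ⇑(b i)) ⬝ᵥ (Pr *ᵥ ⇑(b i)) := dot_mulVec_symm hPrSymm _ _
  have hc0 : ∀ i, 0 ≤ c i := by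
    intro i
    rw [hc_eq i]
    exact Finset.sum_nonneg fun j _ => mul_self_nonneg _
  have hc1 : ∀ i, c i ≤ 1 := by
    intro i
    have hcs := Finset.sum_mul_sq_le_sq_mul_sq Finset.univ (fun j => (b i) j)
      (fun j => (Pr *ᵥ ⇑(b i)) j)
    have h1 : (∑ j, (b i) j * (Pr *ᵥ ⇑(b i)) j) = c i := rfl
    have h2 : (∑ j, ((b i) j) ^ 2) = 1 := by
      have := hbunit i
      simpa [dotProduct, sq] using this
    have h3 : (∑ j, ((Pr *ᵥ ⇑(b i)) j) ^ 2) = c i := by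
      rw [hc_eq i]; simp [dotProduct, sq]
    rw [h1, h2, h3, one_mul] at hcs
    nlinarith [hc0 i]
  have hcone : ∀ i, ev i ≠ 0 → c i = 1 := by
    intro i hi
    rw [hcdef]
    simp only
    rw [hbL i hi]
    exact hbunit i
  -- per-element bound
  have h_perx : ∀ x : Fin D → ℝ,
      (1 / Real.sqrt d) * (∑ i, ev i * |⇑(b i) ⬝ᵥ x|) ≤ euclNorm (M *ᵥ x) := by
    intro x
    set N := euclNorm (M *ᵥ x) with hNdef
    set S := ∑ i, ev i * |⇑(b i) ⬝ᵥ x| with hSdef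
    have hN0 : 0 ≤ N := Real.sqrt_nonneg _
    have hS0 : 0 ≤ S := Finset.sum_nonneg fun i _ => mul_nonneg (hev0 i) (abs_nonneg _)
    have hNsq : N ^ 2 = ∑ i, (ev i * (⇑(b i) ⬝ᵥ x)) ^ 2 := by
      have h1 : N ^ 2 = (M *ᵥ x) ⬝ᵥ (M *ᵥ x) := by
        rw [hNdef]
        unfold euclNorm
        rw [Real.sq_sqrt (by positivity)]
        simp [dotProduct, sq]
      rw [h1, ← parseval_dot b (M *ᵥ x)]
      refine Finset.sum_congr rfl fun i _ => ?_
      rw [dot_mulVec_symm hMsymm, hmvb i, smul_dotProduct, smul_eq_mul]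
    -- Cauchy-Schwarz with the indicator weights
    set e : Fin D → ℝ := fun i => if ev i = 0 then 0 else 1 with hedef
    have hSe : S = ∑ i, e i * (ev i * |⇑(b i) ⬝ᵥ x|) := by
      refine Finset.sum_congr rfl fun i _ => ?_
      by_cases hi : ev i = 0 <;> simp [hedef, hi]
    have hcs := Finset.sum_mul_sq_le_sq_mul_sq Finset.univ e
      (fun i => ev i * |⇑(b i) ⬝ᵥ x|)
    have he2 : (∑ i, (e i) ^ 2) ≤ (d : ℝ) := by
      rw [← hcsum]
      refine Finset.sum_le_sum fun i _ => ?_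
      by_cases hi : ev i = 0
      · simp [hedef, hi]; exact hc0 i
      · simp [hedef, hi, hcone i hi]
    have hval : (∑ i, (ev i * |⇑(b i) ⬝ᵥ x|) ^ 2) = N ^ 2 := by
      rw [hNsq]
      refine Finset.sum_congr rfl fun i _ => ?_
      rw [mul_pow, mul_pow, sq_abs]
    have hS2 : S ^ 2 ≤ (d : ℝ) * N ^ 2 := by
      rw [hSe]
      calc (∑ i, e i * (ev i * |⇑(b i) ⬝ᵥ x|)) ^ 2
          ≤ (∑ i, (e i) ^ 2) * (∑ i, (ev i * |⇑(b i) ⬝ᵥ x|) ^ 2) := hcs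
        _ ≤ (d : ℝ) * N ^ 2 := by
            rw [hval]
            exact mul_le_mul_of_nonneg_right he2 (sq_nonneg _)
    have hSN : S ≤ Real.sqrt d * N := by
      calc S = Real.sqrt (S ^ 2) := (Real.sqrt_sq hS0).symm
        _ ≤ Real.sqrt ((d : ℝ) * N ^ 2) := Real.sqrt_le_sqrt hS2
        _ = Real.sqrt d * N := by
            rw [Real.sqrt_mul (le_of_lt hdpos), Real.sqrt_sq hN0]
    calc (1 / Real.sqrt d) * S ≤ (1 / Real.sqrt d) * (Real.sqrt d * N) := by
          exact mul_le_mul_of_nonneg_left hSN (by positivity)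
      _ = N := by field_simp
  -- membership of eigenvectors in B
  have hmemB : ∀ i, ev i ≠ 0 → (Xin.map fun x => |⇑(b i) ⬝ᵥ x|).sum ∈ B := by
    intro i hi
    refine ⟨⇑(b i), ?_, hbL i hi, ?_⟩
    · unfold euclNorm
      have h2 : (∑ j, ((b i) j) ^ 2) = 1 := by
        simpa [dotProduct, sq] using hbunit i
      rw [h2, Real.sqrt_one]
    · rfl
  -- assemble
  calc (1 / Real.sqrt d) * sInf B
      = (1 / Real.sqrt d) * ((∑ i, ev i) * sInf B) := by rw [hevsum, one_mul]
    _ = (1 / Real.sqrt d) * ∑ i, ev i * sInf B := by rw [Finset.sum_mul]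
    _ ≤ (1 / Real.sqrt d) * ∑ i, ev i * (Xin.map fun x => |⇑(b i) ⬝ᵥ x|).sum := by
        refine mul_le_mul_of_nonneg_left (Finset.sum_le_sum fun i _ => ?_) (by positivity)
        by_cases hi : ev i = 0
        · simp [hi]
        · exact mul_le_mul_of_nonneg_left (csInf_le hBdd (hmemB i hi)) (hev0 i)
    _ = (1 / Real.sqrt d) * (Xin.map fun x => ∑ i, ev i * |⇑(b i) ⬝ᵥ x|).sum := by
        congr 1
        rw [multiset_sum_map_finsetSum]
        exact Finset.sum_congr rfl fun i _ => (Multiset.sum_map_mul_left).symm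
    _ = (Xin.map fun x => (1 / Real.sqrt d) * ∑ i, ev i * |⇑(b i) ⬝ᵥ x|).sum := by
        rw [Multiset.sum_map_mul_left]
    _ ≤ (Xin.map fun x => euclNorm (M.mulVec x)).sum :=
        Multiset.sum_map_le_sum_map _ _ fun x _ => h_perx x
end

section
/- Fix 0 < d < D and nonnegative weights β_x for each x in a finite set X ⊂ R^D. Let C = Σ_x β_x x xᵀ with eigendecomposition C = U Λ Uᵀ, eigenvalues λ_1 ≥ ... ≥ λ_D ≥ 0, and suppose rank C > d. Then there exists θ > 0 with Σ_{i=1}^D (λ_i − θ)_+/λ_i = d, and the matrix P⋆ = U · diag(ν) · Uᵀ with ν_i = (λ_i − θ)_+/λ_i minimizes Σ_{x ∈ X} β_x ‖x − P x‖² over symmetric matrices P with 0 ≼ P ≼ I and tr P = d. -/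
open Matrix Finset

section WaterFillingAux
variable {n : Type*} [Fintype n] [DecidableEq n]

lemma aux_scalar_key (l θ q : ℝ) (hl : 0 ≤ l) (hθ : 0 < θ) (hq0 : 0 ≤ q) (hq1 : q ≤ 1) :
    l * (1 - max (l - θ) 0 / l) ^ 2 - 2 * θ * (1 - max (l - θ) 0 / l)
      ≤ l * q ^ 2 - 2 * θ * q := by
  rcases le_or_gt l θ with h | h
  · have : max (l - θ) 0 = 0 := max_eq_right (by linarith)
    rw [this]
    simp only [zero_div]
    nlinarith [mul_nonneg hl (sq_nonneg (1 - q)),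
      mul_nonneg (sub_nonneg.2 h) (sub_nonneg.2 hq1)]
  · have hlpos : 0 < l := lt_trans hθ h
    have : max (l - θ) 0 = l - θ := max_eq_left (by linarith)
    rw [this]
    have h1 : 1 - (l - θ) / l = θ / l := by field_simp; ring
    rw [h1]
    have h4 : l * (q - θ / l) ^ 2 = l * q ^ 2 - 2 * θ * q + θ * (θ / l) := by
      field_simp; ring
    have h5 : l * (θ / l) ^ 2 = θ * (θ / l) := by field_simp
    nlinarith [mul_nonneg hlpos.le (sq_nonneg (q - θ / l))]

lemma aux_theta_exists (D d : ℕ) (lam : Fin D → ℝ) (hnonneg : ∀ i, 0 ≤ lam i)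
    (hcard : d < Fintype.card {i // lam i ≠ 0}) :
    ∃ θ : ℝ, 0 < θ ∧ (∑ i, max (lam i - θ) 0 / lam i) = (d : ℝ) := by
  set f : ℝ → ℝ := fun θ => ∑ i, max (lam i - θ) 0 / lam i with hf
  have hcont : Continuous f := by
    apply continuous_finset_sum
    intro i _
    exact ((continuous_const.sub continuous_id).max continuous_const).div_const _
  have hne : ∃ i, lam i ≠ 0 := by
    by_contra hcon
    push_neg at hcon
    have : Fintype.card {i // lam i ≠ 0} = 0 :=
      Fintype.card_eq_zero_iff.2 ⟨fun x => x.2 (hcon x.1)⟩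
    omega
  obtain ⟨i0, hi0⟩ := hne
  obtain ⟨j, _, hj⟩ := Finset.exists_max_image Finset.univ lam ⟨i0, Finset.mem_univ i0⟩
  have hMpos : 0 < lam j := by
    rcases (hnonneg j).lt_or_eq with h | h
    · exact h
    · exact absurd (le_antisymm (h ▸ hj i0 (Finset.mem_univ i0)) (hnonneg i0)) hi0
  have hfM : f (lam j) = 0 := by
    apply Finset.sum_eq_zero
    intro i _
    rw [max_eq_right (by linarith [hj i (Finset.mem_univ i)]), zero_div]
  have hf0 : f 0 = Fintype.card {i // lam i ≠ 0} := by
    rw [hf]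
    simp only [sub_zero, Fintype.card_subtype]
    rw [show (∑ i, (lam i ⊔ 0) / lam i) = ∑ i, if lam i ≠ 0 then (1:ℝ) else 0 from
      Finset.sum_congr rfl fun i _ => by
        rcases eq_or_ne (lam i) 0 with h | h
        · simp [h]
        · rw [max_eq_left (hnonneg i), div_self h, if_pos h]]
    rw [Finset.sum_boole]
  have hd0 : (d : ℝ) ∈ Set.Icc (f (lam j)) (f 0) := by
    constructor
    · rw [hfM]; positivity
    · rw [hf0]
      exact_mod_cast (le_of_lt hcard)
  obtain ⟨θ, hθmem, hθ⟩ := intermediate_value_Icc' hMpos.le hcont.continuousOn hd0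
  refine ⟨θ, ?_, hθ⟩
  rcases hθmem.1.lt_or_eq with h | h
  · exact h
  · exfalso
    rw [← h] at hθ
    rw [hf0] at hθ
    have : Fintype.card {i // lam i ≠ 0} = d := Nat.cast_injective hθ
    omega

lemma aux_trace_vmv (M : Matrix n n ℝ) (x y : n → ℝ) :
    (M * Matrix.vecMulVec x y).trace = y ⬝ᵥ (M *ᵥ x) := by
  simp only [Matrix.trace, Matrix.diag, Matrix.mul_apply, Matrix.vecMulVec_apply,
    dotProduct, Matrix.mulVec, Finset.mul_sum]
  refine Finset.sum_congr rfl fun i _ => Finset.sum_congr rfl fun j _ => by ring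

lemma aux_trace_vecMulVec (Q : Matrix n n ℝ) (x : n → ℝ) :
    (Qᵀ * Q * Matrix.vecMulVec x x).trace = ∑ k, (Q.mulVec x k) ^ 2 := by
  rw [aux_trace_vmv, ← Matrix.mulVec_mulVec, Matrix.dotProduct_mulVec,
    Matrix.vecMul_transpose]
  simp [dotProduct, sq]

lemma aux_psd_diag (M : Matrix n n ℝ) (hM : M.PosSemidef) (i : n) : 0 ≤ M i i := by
  exact hM.diag_nonneg

lemma aux_trace_mul_diag (M : Matrix n n ℝ) (w : n → ℝ) :
    (M * Matrix.diagonal w).trace = ∑ i, M i i * w i := by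
  simp [Matrix.trace, Matrix.diag, Matrix.mul_diagonal]

lemma aux_obj_as_trace (X : Finset (n → ℝ)) (β : (n → ℝ) → ℝ) (P : Matrix n n ℝ) :
    (∑ x ∈ X, β x * ∑ j, (x j - P.mulVec x j) ^ 2)
      = ((1 - P)ᵀ * (1 - P) * ∑ x ∈ X, β x • Matrix.vecMulVec x x).trace := by
  rw [Matrix.mul_sum, Matrix.trace_sum]
  refine Finset.sum_congr rfl fun x _ => ?_
  rw [Matrix.mul_smul, Matrix.trace_smul, aux_trace_vecMulVec, smul_eq_mul]
  congr 1
  refine Finset.sum_congr rfl fun j _ => ?_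
  rw [Matrix.sub_mulVec, Matrix.one_mulVec]
  simp [Pi.sub_apply]

lemma aux_trace_form (U Q : Matrix n n ℝ) (lam : n → ℝ)
    (hU : U * Uᵀ = 1) (hQ : Qᵀ = Q) :
    (Qᵀ * Q * (U * Matrix.diagonal lam * Uᵀ)).trace
      = ∑ i, ∑ j, lam i * ((Uᵀ * Q * U) i j) ^ 2 := by
  set A := Uᵀ * Q * U with hA
  have cancel : ∀ Z : Matrix n n ℝ, U * (Uᵀ * Z) = Z := fun Z => by
    rw [← Matrix.mul_assoc, hU, Matrix.one_mul]
  have e1 : Qᵀ * Q * (U * Matrix.diagonal lam * Uᵀ)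
      = (Q * Q * U * Matrix.diagonal lam) * Uᵀ := by
    rw [hQ]; simp only [Matrix.mul_assoc]
  have e2 : A * A * Matrix.diagonal lam = Uᵀ * (Q * Q * U * Matrix.diagonal lam) := by
    simp only [hA, Matrix.mul_assoc, cancel]
  have hAsymm : Aᵀ = A := by
    simp only [hA, Matrix.transpose_mul, Matrix.transpose_transpose, hQ, Matrix.mul_assoc]
  rw [e1, Matrix.trace_mul_comm, ← e2, aux_trace_mul_diag]
  refine Finset.sum_congr rfl fun i _ => ?_
  rw [Matrix.mul_apply, Finset.sum_mul]
  refine Finset.sum_congr rfl fun j _ => ?_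
  have : A j i = A i j :=
    (Matrix.transpose_apply A i j).symm.trans (congrFun (congrFun hAsymm i) j)
  rw [this]; ring

end WaterFillingAux

/-- water-filling solution of the weighted least-squares
subproblem.  Fix `0 < d < D` and nonnegative weights `β_x` on a finite set
`X ⊆ ℝ^D`.  Let `C = Σ_x β_x x xᵀ` have eigendecomposition `C = U Λ Uᵀ` with
`λ_1 ≥ … ≥ λ_D ≥ 0` and `rank C > d`.  Then there is `θ > 0` with
`Σ_i (λ_i − θ)_+ / λ_i = d`, and `P⋆ = U diag(ν) Uᵀ`, `ν_i = (λ_i − θ)_+/λ_i`,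
minimizes `Σ_x β_x ‖x − P x‖²` over symmetric `P` with `0 ≼ P ≼ I`,
`tr P = d`. -/
theorem weighted_least_squares_water_filling
    (D d : ℕ) (hd0 : 0 < d) (hdD : d < D)
    (X : Finset (Fin D → ℝ)) (β : (Fin D → ℝ) → ℝ) (hβ : ∀ x ∈ X, 0 ≤ β x)
    (U : Matrix (Fin D) (Fin D) ℝ) (hU : U * U.transpose = 1)
    (lam : Fin D → ℝ)
    (hmono : ∀ i j : Fin D, i ≤ j → lam j ≤ lam i)
    (hnonneg : ∀ i, 0 ≤ lam i)
    (hC : (∑ x ∈ X, β x • Matrix.vecMulVec x x) =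
        U * Matrix.diagonal lam * U.transpose)
    (hrank : d < (∑ x ∈ X, β x • Matrix.vecMulVec x x).rank) :
    ∃ θ : ℝ, 0 < θ ∧ (∑ i, max (lam i - θ) 0 / lam i) = (d : ℝ) ∧
      ((U * Matrix.diagonal (fun i => max (lam i - θ) 0 / lam i) *
          U.transpose).PosSemidef ∧
        (1 - U * Matrix.diagonal (fun i => max (lam i - θ) 0 / lam i) *
            U.transpose).PosSemidef ∧
        (U * Matrix.diagonal (fun i => max (lam i - θ) 0 / lam i) *
            U.transpose).trace = (d : ℝ)) ∧
      ∀ P : Matrix (Fin D) (Fin D) ℝ,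
        P.PosSemidef → (1 - P).PosSemidef → P.trace = (d : ℝ) →
        (∑ x ∈ X, β x * ∑ j, (x j -
            (U * Matrix.diagonal (fun i => max (lam i - θ) 0 / lam i) *
              U.transpose).mulVec x j) ^ 2)
          ≤ ∑ x ∈ X, β x * ∑ j, (x j - P.mulVec x j) ^ 2 := by
  classical
  have hUtU : Uᵀ * U = 1 := mul_eq_one_comm.mp hU
  have hUconj : Uᴴ = Uᵀ := Matrix.conjTranspose_eq_transpose_of_trivial U
  have cancelL : ∀ Z : Matrix (Fin D) (Fin D) ℝ, U * (Uᵀ * Z) = Z := fun Z => by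
    rw [← Matrix.mul_assoc, hU, Matrix.one_mul]
  -- rank bound gives enough positive eigenvalues
  have hcard : d < Fintype.card {i // lam i ≠ 0} := by
    calc d < (∑ x ∈ X, β x • Matrix.vecMulVec x x).rank := hrank
    _ ≤ (Matrix.diagonal lam).rank := by
        rw [hC]
        exact le_trans (Matrix.rank_mul_le_left _ _) (Matrix.rank_mul_le_right _ _)
    _ = Fintype.card {i // lam i ≠ 0} := Matrix.rank_diagonal lam
  obtain ⟨θ, hθpos, hθeq⟩ := aux_theta_exists D d lam hnonneg hcard
  set ν : Fin D → ℝ := fun i => max (lam i - θ) 0 / lam i with hν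
  set μ : Fin D → ℝ := fun i => 1 - ν i with hμ
  have hν0 : ∀ i, 0 ≤ ν i := fun i => div_nonneg (le_max_right _ _) (hnonneg i)
  have hν1 : ∀ i, ν i ≤ 1 := by
    intro i
    rcases eq_or_ne (lam i) 0 with h | h
    · simp only [hν, h, div_zero]; norm_num
    · have hpos : 0 < lam i := lt_of_le_of_ne (hnonneg i) (Ne.symm h)
      rw [hν]
      rw [div_le_one hpos]
      exact max_le (by linarith) (hnonneg i)
  set Pstar := U * Matrix.diagonal ν * Uᵀ with hPstar
  -- 1 - Pstar
  have hdiagμ : Matrix.diagonal μ = 1 - Matrix.diagonal ν := by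
    rw [← Matrix.diagonal_one, ← Matrix.diagonal_sub]
  have hone : 1 - Pstar = U * Matrix.diagonal μ * Uᵀ := by
    rw [hdiagμ, Matrix.mul_sub, Matrix.mul_one, Matrix.sub_mul, hU, hPstar]
  -- PSD facts
  have hPstarPSD : Pstar.PosSemidef := by
    have := (Matrix.PosSemidef.diagonal (d := ν) (fun i => hν0 i)).mul_mul_conjTranspose_same U
    rwa [hUconj] at this
  have honePSD : (1 - Pstar).PosSemidef := by
    rw [hone]
    have := (Matrix.PosSemidef.diagonal (d := μ)
      (fun i => by simpa [hμ] using sub_nonneg.2 (hν1 i))).mul_mul_conjTranspose_same U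
    rwa [hUconj] at this
  have htrPstar : Pstar.trace = (d : ℝ) := by
    rw [hPstar, Matrix.trace_mul_cycle, hUtU, Matrix.one_mul, Matrix.trace_diagonal, ← hθeq]
  refine ⟨θ, hθpos, hθeq, ⟨hPstarPSD, honePSD, htrPstar⟩, ?_⟩
  -- optimality
  intro P hP hP1 htr
  have hQsymm : (1 - P)ᵀ = 1 - P := by
    have := hP1.isHermitian
    rwa [Matrix.IsHermitian, Matrix.conjTranspose_eq_transpose_of_trivial] at this
  set A := Uᵀ * (1 - P) * U with hA
  have hobjP : (∑ x ∈ X, β x * ∑ j, (x j - P.mulVec x j) ^ 2)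
      = ∑ i, ∑ j, lam i * (A i j) ^ 2 := by
    rw [aux_obj_as_trace, hC, aux_trace_form U (1 - P) lam hU hQsymm]
  -- A is PSD with diagonal in [0,1] and trace D - d
  have hAPSD : A.PosSemidef := by
    have := hP1.conjTranspose_mul_mul_same U
    rwa [hUconj] at this
  have h1A : 1 - A = Uᵀ * P * U := by
    rw [hA, Matrix.mul_sub, Matrix.mul_one, Matrix.sub_mul, hUtU]
    simp [Matrix.mul_assoc]
  have h1APSD : (1 - A).PosSemidef := by
    rw [h1A]
    have := hP.conjTranspose_mul_mul_same U
    rwa [hUconj] at this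
  have hq0 : ∀ i, 0 ≤ A i i := fun i => aux_psd_diag A hAPSD i
  have hq1 : ∀ i, A i i ≤ 1 := by
    intro i
    have := aux_psd_diag _ h1APSD i
    simp only [Matrix.sub_apply, Matrix.one_apply_eq] at this
    linarith
  have htrA : ∑ i, A i i = (D : ℝ) - d := by
    have : A.trace = (1 - P).trace := by
      rw [hA, Matrix.trace_mul_cycle, hU, Matrix.one_mul]
    have h2 : (1 - P).trace = (D : ℝ) - d := by
      rw [Matrix.trace_sub, Matrix.trace_one, htr]
      simp
    rw [← h2, ← this]
    rfl
  have hsumμ : ∑ i, μ i = (D : ℝ) - d := by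
    rw [hμ]
    rw [Finset.sum_sub_distrib]
    rw [show (∑ i : Fin D, ν i) = (d : ℝ) from hθeq]
    simp
  -- scalar inequality summed
  have hkey : ∑ i, lam i * μ i ^ 2 ≤ ∑ i, lam i * (A i i) ^ 2 := by
    have h1 : ∑ i, (lam i * μ i ^ 2 - 2 * θ * μ i)
        ≤ ∑ i, (lam i * (A i i) ^ 2 - 2 * θ * (A i i)) := by
      refine Finset.sum_le_sum fun i _ => ?_
      exact aux_scalar_key (lam i) θ (A i i) (hnonneg i) hθpos (hq0 i) (hq1 i)
    have h2 : ∑ i, (lam i * μ i ^ 2 - 2 * θ * μ i)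
        = (∑ i, lam i * μ i ^ 2) - 2 * θ * ((D : ℝ) - d) := by
      rw [Finset.sum_sub_distrib, ← Finset.mul_sum, hsumμ]
    have h3 : ∑ i, (lam i * (A i i) ^ 2 - 2 * θ * (A i i))
        = (∑ i, lam i * (A i i) ^ 2) - 2 * θ * ((D : ℝ) - d) := by
      rw [Finset.sum_sub_distrib, ← Finset.mul_sum, htrA]
    linarith
  have hdiagsum : ∑ i, lam i * (A i i) ^ 2 ≤ ∑ i, ∑ j, lam i * (A i j) ^ 2 := by
    refine Finset.sum_le_sum fun i _ => ?_
    exact Finset.single_le_sum (f := fun j => lam i * (A i j) ^ 2)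
      (fun j _ => mul_nonneg (hnonneg i) (sq_nonneg _)) (Finset.mem_univ i)
  -- objective at Pstar
  have hAstar : Uᵀ * (1 - Pstar) * U = Matrix.diagonal μ := by
    rw [hone]
    simp only [Matrix.mul_assoc, hUtU, Matrix.mul_one, cancelL]
    rw [← Matrix.mul_assoc, hUtU, Matrix.one_mul]
  have hQstarSymm : (1 - Pstar)ᵀ = 1 - Pstar := by
    have := honePSD.isHermitian
    rwa [Matrix.IsHermitian, Matrix.conjTranspose_eq_transpose_of_trivial] at this
  have hobjPstar : (∑ x ∈ X, β x * ∑ j, (x j - Pstar.mulVec x j) ^ 2)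
      = ∑ i, lam i * μ i ^ 2 := by
    rw [aux_obj_as_trace, hC, aux_trace_form U (1 - Pstar) lam hU hQstarSymm, hAstar]
    refine Finset.sum_congr rfl fun i _ => ?_
    rw [Finset.sum_eq_single i]
    · rw [Matrix.diagonal_apply_eq]
    · intro j _ hj
      rw [Matrix.diagonal_apply_ne' _ hj]
      ring
    · intro h
      exact absurd (Finset.mem_univ i) h
  calc (∑ x ∈ X, β x * ∑ j, (x j - Pstar.mulVec x j) ^ 2)
      = ∑ i, lam i * μ i ^ 2 := hobjPstar
    _ ≤ ∑ i, lam i * (A i i) ^ 2 := hkey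
    _ ≤ ∑ i, ∑ j, lam i * (A i j) ^ 2 := hdiagsum
    _ = ∑ x ∈ X, β x * ∑ j, (x j - P.mulVec x j) ^ 2 := hobjP.symm
end

section
/- Fix 0 < d < D and a finite set X ⊂ R^D. For every symmetric matrix P with 0 ≼ P and tr P = d there exists a symmetric matrix P′ with 0 ≼ P′ ≼ I, tr P′ = d, and Σ_{x ∈ X} ‖x − P′x‖ ≤ Σ_{x ∈ X} ‖x − Px‖. Consequently the problem minimizing Σ_{x ∈ X} ‖x − Px‖ subject to 0 ≼ P and tr P = d has an optimal point satisfying P ≼ I. -/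
open Matrix

lemma conj_trace {D : ℕ} (U : Matrix (Fin D) (Fin D) ℝ)
    (h : U ∈ Matrix.unitaryGroup (Fin D) ℝ) (f : Fin D → ℝ) :
    (U * diagonal f * star U).trace = ∑ i, f i := by
  rw [Matrix.trace_mul_cycle, Matrix.mem_unitaryGroup_iff'.mp h, one_mul, Matrix.trace_diagonal]

lemma conj_one_sub {D : ℕ} (U : Matrix (Fin D) (Fin D) ℝ)
    (h : U ∈ Matrix.unitaryGroup (Fin D) ℝ) (f : Fin D → ℝ) :
    1 - U * diagonal f * star U = U * diagonal (fun i => 1 - f i) * star U := by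
  have h1 : (diagonal (fun i => 1 - f i) : Matrix (Fin D) (Fin D) ℝ)
      = 1 - diagonal f := by
    rw [← Matrix.diagonal_one, ← Matrix.diagonal_sub]
  rw [h1, Matrix.mul_sub, Matrix.sub_mul, Matrix.mul_one, Matrix.mem_unitaryGroup_iff.mp h]

lemma conj_mul_conj {D : ℕ} (U : Matrix (Fin D) (Fin D) ℝ)
    (h : U ∈ Matrix.unitaryGroup (Fin D) ℝ) (f g : Fin D → ℝ) :
    (U * diagonal f * star U) * (U * diagonal g * star U)
      = U * diagonal (fun i => f i * g i) * star U := by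
  simp only [Matrix.mul_assoc]
  rw [← Matrix.mul_assoc (star U) U, Matrix.mem_unitaryGroup_iff'.mp h, one_mul,
    ← Matrix.mul_assoc (diagonal f) (diagonal g), Matrix.diagonal_mul_diagonal]

lemma euclNorm_mulVec_sq {D : ℕ} (M : Matrix (Fin D) (Fin D) ℝ) (hM : M.IsHermitian)
    (x : Fin D → ℝ) : (∑ i, (M.mulVec x) i ^ 2) = x ⬝ᵥ (M * M).mulVec x := by
  have h1 : (∑ i, (M.mulVec x) i ^ 2) = (M.mulVec x) ⬝ᵥ (M.mulVec x) := by
    simp [dotProduct, pow_two]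
  have hMt : Mᵀ = M := by
    have := hM; rwa [Matrix.IsHermitian, Matrix.conjTranspose_eq_transpose_of_trivial] at this
  rw [h1, ← Matrix.mulVec_mulVec, Matrix.dotProduct_mulVec (M.mulVec x) M x,
    ← hMt, Matrix.vecMul_transpose, hMt, Matrix.mulVec_mulVec, dotProduct_comm]

lemma key {D : ℕ} (d : ℕ) (hdD : d < D) (P : Matrix (Fin D) (Fin D) ℝ)
    (hP : P.PosSemidef) (htr : P.trace = (d : ℝ)) :
    ∃ P' : Matrix (Fin D) (Fin D) ℝ, P'.PosSemidef ∧ (1 - P').PosSemidef ∧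
      P'.trace = (d : ℝ) ∧
      ∀ x : Fin D → ℝ, euclNorm (x - P'.mulVec x) ≤ euclNorm (x - P.mulVec x) := by
  classical
  set U : Matrix (Fin D) (Fin D) ℝ := (hP.1.eigenvectorUnitary : Matrix (Fin D) (Fin D) ℝ)
    with hU
  have hUmem : U ∈ Matrix.unitaryGroup (Fin D) ℝ := hP.1.eigenvectorUnitary.2
  set l : Fin D → ℝ := hP.1.eigenvalues with hl
  have hspec : P = U * diagonal l * star U := by
    have := hP.1.spectral_theorem; simpa using this
  have hl0 : ∀ i, 0 ≤ l i := fun i => hP.eigenvalues_nonneg i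
  have hsuml : ∑ i, l i = (d : ℝ) := by
    rw [← htr, hspec, conj_trace U hUmem]
  set m : Fin D → ℝ := fun i => min (l i) 1 with hm
  have hm0 : ∀ i, 0 ≤ m i := fun i => le_min (hl0 i) zero_le_one
  have hm1 : ∀ i, m i ≤ 1 := fun i => min_le_right _ _
  have hml : ∀ i, m i ≤ l i := fun i => min_le_left _ _
  set S : ℝ := ∑ i, m i with hS
  have hSd : S ≤ (d : ℝ) := by
    rw [← hsuml]; exact Finset.sum_le_sum fun i _ => hml i
  have hSD : S < (D : ℝ) := lt_of_le_of_lt hSd (by exact_mod_cast hdD)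
  set t : ℝ := ((d : ℝ) - S) / ((D : ℝ) - S) with ht
  have ht0 : 0 ≤ t := div_nonneg (by linarith) (by linarith)
  have ht1 : t ≤ 1 := by
    rw [ht, div_le_one (by linarith)]
    have : (d : ℝ) ≤ (D : ℝ) := by exact_mod_cast hdD.le
    linarith
  set l' : Fin D → ℝ := fun i => m i + t * (1 - m i) with hl'
  have hl'0 : ∀ i, 0 ≤ l' i := fun i => by
    have := hm0 i; have := hm1 i; have : 0 ≤ t * (1 - m i) := mul_nonneg ht0 (by linarith)
    simp only [hl']; linarith [hm0 i]
  have hl'1 : ∀ i, l' i ≤ 1 := fun i => by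
    have h1 : m i + t * (1 - m i) ≤ m i + 1 * (1 - m i) :=
      (add_le_add_iff_left _).mpr (mul_le_mul_of_nonneg_right ht1 (by linarith [hm1 i]))
    simp only [hl']; linarith
  have hsuml' : ∑ i, l' i = (d : ℝ) := by
    have hcard : ∑ _i : Fin D, (1 : ℝ) = (D : ℝ) := by simp
    have : ∑ i, l' i = S + t * ((D : ℝ) - S) := by
      simp only [hl', Finset.sum_add_distrib, ← Finset.mul_sum, Finset.sum_sub_distrib, hcard]; rfl
    rw [this, ht, div_mul_cancel₀]
    · ring
    · linarith
  have hsq : ∀ i, (1 - l' i) ^ 2 ≤ (1 - l i) ^ 2 := by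
    intro i
    have h1 : 1 - l' i = (1 - t) * (1 - m i) := by simp only [hl']; ring
    have h2 : 0 ≤ 1 - l' i := by linarith [hl'1 i]
    have h3 : 1 - l' i ≤ |1 - l i| := by
      rw [h1]
      have h4 : (1 - t) * (1 - m i) ≤ 1 * (1 - m i) :=
        mul_le_mul_of_nonneg_right (by linarith) (by linarith [hm1 i])
      have h5 : 1 - m i ≤ |1 - l i| := by
        rcases le_or_gt (l i) 1 with h | h
        · have : m i = l i := min_eq_left h
          rw [this]; exact le_abs_self _
        · have : m i = 1 := min_eq_right h.le
          rw [this]; simp [abs_nonneg]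
      linarith
    calc (1 - l' i) ^ 2 ≤ |1 - l i| ^ 2 := by
          apply sq_le_sq' (by linarith [abs_nonneg (1 - l i)]) h3
      _ = (1 - l i) ^ 2 := sq_abs _
  refine ⟨U * diagonal l' * star U, ?_, ?_, ?_, ?_⟩
  · have : (diagonal l').PosSemidef := Matrix.PosSemidef.diagonal (fun i => hl'0 i)
    simpa [Matrix.star_eq_conjTranspose] using this.mul_mul_conjTranspose_same U
  · rw [conj_one_sub U hUmem]
    have : (diagonal (fun i => 1 - l' i) : Matrix (Fin D) (Fin D) ℝ).PosSemidef :=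
      Matrix.PosSemidef.diagonal (fun i => by
        simp only [Pi.zero_apply]; linarith [hl'1 i])
    simpa [Matrix.star_eq_conjTranspose] using this.mul_mul_conjTranspose_same U
  · rw [conj_trace U hUmem, hsuml']
  · intro x
    set M : Matrix (Fin D) (Fin D) ℝ := U * diagonal (fun i => 1 - l i) * star U with hM
    set M' : Matrix (Fin D) (Fin D) ℝ := U * diagonal (fun i => 1 - l' i) * star U with hM'
    have hMH : M.IsHermitian := by
      rw [hM]
      have := Matrix.isHermitian_mul_mul_conjTranspose U
        (Matrix.isHermitian_diagonal (fun i => 1 - l i))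
      simpa [Matrix.star_eq_conjTranspose] using this
    have hM'H : M'.IsHermitian := by
      rw [hM']
      have := Matrix.isHermitian_mul_mul_conjTranspose U
        (Matrix.isHermitian_diagonal (fun i => 1 - l' i))
      simpa [Matrix.star_eq_conjTranspose] using this
    have hx : x - P.mulVec x = M.mulVec x := by
      rw [hM, ← conj_one_sub U hUmem, Matrix.sub_mulVec, Matrix.one_mulVec, hspec]
    have hx' : x - (U * diagonal l' * star U).mulVec x = M'.mulVec x := by
      rw [hM', ← conj_one_sub U hUmem, Matrix.sub_mulVec, Matrix.one_mulVec]
    rw [hx, hx']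
    unfold euclNorm
    apply Real.sqrt_le_sqrt
    rw [euclNorm_mulVec_sq M hMH x, euclNorm_mulVec_sq M' hM'H x]
    have hMM : M * M = U * diagonal (fun i => (1 - l i) ^ 2) * star U := by
      rw [hM, conj_mul_conj U hUmem,
        show (fun i => (1 - l i) * (1 - l i)) = (fun i => (1 - l i) ^ 2) by funext i; ring]
    have hMM' : M' * M' = U * diagonal (fun i => (1 - l' i) ^ 2) * star U := by
      rw [hM', conj_mul_conj U hUmem,
        show (fun i => (1 - l' i) * (1 - l' i)) = (fun i => (1 - l' i) ^ 2) by funext i; ring]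
    have hdiff : (M * M - M' * M').PosSemidef := by
      have h1 : M * M - M' * M'
          = U * diagonal (fun i => (1 - l i) ^ 2 - (1 - l' i) ^ 2) * star U := by
        rw [hMM, hMM']
        rw [show (diagonal (fun i => (1 - l i) ^ 2 - (1 - l' i) ^ 2) : Matrix (Fin D) (Fin D) ℝ)
          = diagonal (fun i => (1 - l i) ^ 2) - diagonal (fun i => (1 - l' i) ^ 2) from
          (Matrix.diagonal_sub _ _).symm]
        rw [Matrix.mul_sub, Matrix.sub_mul]
      rw [h1]
      have : (diagonal (fun i => (1 - l i) ^ 2 - (1 - l' i) ^ 2) :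
          Matrix (Fin D) (Fin D) ℝ).PosSemidef :=
        Matrix.PosSemidef.diagonal (fun i => by
          simp only [Pi.zero_apply]; linarith [hsq i])
      simpa [Matrix.star_eq_conjTranspose] using this.mul_mul_conjTranspose_same U
    have := hdiff.dotProduct_mulVec_nonneg x
    have hsub : (M * M - M' * M').mulVec x = (M * M).mulVec x - (M' * M').mulVec x :=
      Matrix.sub_mulVec _ _ _
    rw [hsub] at this
    simp only [star_trivial, dotProduct_sub] at this
    linarith


section Part2
variable {D : ℕ}

abbrev Mat (D : ℕ) := Matrix (Fin D) (Fin D) ℝ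

lemma quad_single {P : Mat D} (i j : Fin D) :
    (Pi.single i (1:ℝ) + Pi.single j 1) ⬝ᵥ P.mulVec (Pi.single i 1 + Pi.single j 1)
      = P i i + P i j + P j i + P j j := by
  simp [Matrix.mulVec_add, Matrix.mulVec_single, dotProduct_add,
    add_dotProduct, single_dotProduct]
  ring

lemma quad_single_sub {P : Mat D} (i j : Fin D) :
    (Pi.single i (1:ℝ) - Pi.single j 1) ⬝ᵥ P.mulVec (Pi.single i 1 - Pi.single j 1)
      = P i i - P i j - P j i + P j j := by
  simp [Matrix.mulVec_sub, Matrix.mulVec_single, dotProduct_sub,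
    sub_dotProduct, single_dotProduct]
  ring

lemma quad_single_self {P : Mat D} (i : Fin D) :
    (Pi.single i (1:ℝ)) ⬝ᵥ P.mulVec (Pi.single i 1) = P i i := by
  simp [Matrix.mulVec_single, single_dotProduct]

lemma entry_bound {P : Mat D} (hP : P.PosSemidef) (hQ : (1 - P).PosSemidef)
    (i j : Fin D) : |P i j| ≤ 1 := by
  have hii0 : 0 ≤ P i i := by simpa [quad_single_self] using hP.dotProduct_mulVec_nonneg (Pi.single i 1)
  have hjj0 : 0 ≤ P j j := by simpa [quad_single_self] using hP.dotProduct_mulVec_nonneg (Pi.single j 1)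
  have hii1 : P i i ≤ 1 := by
    have := hQ.dotProduct_mulVec_nonneg (Pi.single i 1)
    simp only [star_trivial, quad_single_self] at this
    simp only [Matrix.sub_apply, Matrix.one_apply_eq] at this
    linarith
  have hjj1 : P j j ≤ 1 := by
    have := hQ.dotProduct_mulVec_nonneg (Pi.single j 1)
    simp only [star_trivial, quad_single_self] at this
    simp only [Matrix.sub_apply, Matrix.one_apply_eq] at this
    linarith
  have hsym : P j i = P i j := by
    have := hP.1
    have h2 := congrFun (congrFun this i) j
    simpa [Matrix.conjTranspose_apply] using h2
  have hplus : 0 ≤ P i i + P i j + P j i + P j j := by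
    have h := hP.dotProduct_mulVec_nonneg (Pi.single i 1 + Pi.single j 1)
    simp only [star_trivial] at h
    rwa [quad_single] at h
  have hminus : 0 ≤ P i i - P i j - P j i + P j j := by
    have h := hP.dotProduct_mulVec_nonneg (Pi.single i 1 - Pi.single j 1)
    simp only [star_trivial] at h
    rwa [quad_single_sub] at h
  rw [hsym] at hplus hminus
  rw [abs_le]
  constructor <;> linarith

end Part2

lemma continuous_entry {D : ℕ} (i j : Fin D) : Continuous (fun P : Mat D => P i j) :=
  (continuous_apply j).comp (continuous_apply i)

lemma continuous_quadform {D : ℕ} (x : Fin D → ℝ) :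
    Continuous (fun P : Mat D => x ⬝ᵥ P.mulVec x) := by
  have : (fun P : Mat D => x ⬝ᵥ P.mulVec x)
      = fun P => ∑ j, x j * ∑ i, P j i * x i := by
    funext P; simp [dotProduct, Matrix.mulVec]
  rw [this]
  exact continuous_finset_sum _ fun j _ => continuous_const.mul
    (continuous_finset_sum _ fun i _ => (continuous_entry j i).mul continuous_const)

lemma isClosed_psd {D : ℕ} : IsClosed {P : Mat D | P.PosSemidef} := by
  have h : {P : Mat D | P.PosSemidef} =
      {P : Mat D | ∀ i j, P j i = P i j} ∩ ⋂ x : Fin D → ℝ, {P | 0 ≤ x ⬝ᵥ P.mulVec x} := by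
    ext P
    simp only [Set.mem_setOf_eq, Set.mem_inter_iff, Set.mem_iInter]
    constructor
    · intro hP
      refine ⟨fun i j => ?_, fun x => by simpa using hP.dotProduct_mulVec_nonneg x⟩
      have h2 := congrFun (congrFun hP.1 i) j
      simpa [Matrix.conjTranspose_apply] using h2
    · intro ⟨h1, h2⟩
      refine Matrix.PosSemidef.of_dotProduct_mulVec_nonneg ?_ ?_
      · ext i j
        simp only [Matrix.conjTranspose_apply, star_trivial]
        exact h1 i j
      · intro x; simpa using h2 x
  rw [h]
  refine IsClosed.inter ?_ (isClosed_iInter fun x =>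
    isClosed_le continuous_const (continuous_quadform x))
  have : {P : Mat D | ∀ i j, P j i = P i j} = ⋂ i, ⋂ j, {P : Mat D | P j i = P i j} := by
    ext P; simp
  rw [this]
  exact isClosed_iInter fun i => isClosed_iInter fun j =>
    isClosed_eq (continuous_entry j i) (continuous_entry i j)

lemma continuous_obj {D : ℕ} (X : Finset (Fin D → ℝ)) :
    Continuous (fun P : Mat D => ∑ x ∈ X, euclNorm (x - P.mulVec x)) := by
  apply continuous_finset_sum
  intro x _
  apply Real.continuous_sqrt.comp
  apply continuous_finset_sum
  intro i _
  have : Continuous (fun P : Mat D => x i - ∑ j, P i j * x j) :=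
    continuous_const.sub (continuous_finset_sum _ fun j _ =>
      (continuous_entry i j).mul continuous_const)
  have h2 : (fun P : Mat D => (x - P.mulVec x) i ^ 2)
      = fun P => (x i - ∑ j, P i j * x j) ^ 2 := by
    funext P; simp [Matrix.mulVec, dotProduct]
  rw [h2]
  exact this.pow 2

/-- weak REAPER: fix `0 < d < D` and a finite set `X ⊆ ℝ^D`.
For every symmetric `P ≽ 0` with `tr P = d`, there is a symmetric `P'` with
`0 ≼ P' ≼ I`, `tr P' = d` and `Σ_x ‖x − P'x‖ ≤ Σ_x ‖x − Px‖`.  Consequently,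
the problem of minimizing `Σ_x ‖x − Px‖` subject to `P ≽ 0`, `tr P = d` has an
optimal point satisfying `P ≼ I`. -/
theorem weak_reaper_has_bounded_solution
    (D d : ℕ) (hd0 : 0 < d) (hdD : d < D) (X : Finset (Fin D → ℝ)) :
    (∀ P : Matrix (Fin D) (Fin D) ℝ, P.PosSemidef → P.trace = (d : ℝ) →
      ∃ P' : Matrix (Fin D) (Fin D) ℝ, P'.PosSemidef ∧ (1 - P').PosSemidef ∧
        P'.trace = (d : ℝ) ∧
        (∑ x ∈ X, euclNorm (x - P'.mulVec x)) ≤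
          ∑ x ∈ X, euclNorm (x - P.mulVec x)) ∧
    ∃ Pstar : Matrix (Fin D) (Fin D) ℝ, Pstar.PosSemidef ∧
      (1 - Pstar).PosSemidef ∧ Pstar.trace = (d : ℝ) ∧
      ∀ P : Matrix (Fin D) (Fin D) ℝ, P.PosSemidef → P.trace = (d : ℝ) →
        (∑ x ∈ X, euclNorm (x - Pstar.mulVec x)) ≤
          ∑ x ∈ X, euclNorm (x - P.mulVec x) := by
  have part1 : ∀ P : Matrix (Fin D) (Fin D) ℝ, P.PosSemidef → P.trace = (d : ℝ) →
      ∃ P' : Matrix (Fin D) (Fin D) ℝ, P'.PosSemidef ∧ (1 - P').PosSemidef ∧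
        P'.trace = (d : ℝ) ∧
        (∑ x ∈ X, euclNorm (x - P'.mulVec x)) ≤
          ∑ x ∈ X, euclNorm (x - P.mulVec x) := by
    intro P hP htr
    obtain ⟨P', h1, h2, h3, h4⟩ := key d hdD P hP htr
    exact ⟨P', h1, h2, h3, Finset.sum_le_sum fun x _ => h4 x⟩
  refine ⟨part1, ?_⟩
  set f : Mat D → ℝ := fun P => ∑ x ∈ X, euclNorm (x - P.mulVec x) with hf
  set K : Set (Mat D) := {P | P.PosSemidef ∧ (1 - P).PosSemidef ∧ P.trace = (d : ℝ)} with hK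
  have hKclosed : IsClosed K := by
    have h1 : IsClosed {P : Mat D | (1 - P).PosSemidef} :=
      isClosed_psd.preimage (continuous_const.sub continuous_id)
    have h2 : IsClosed {P : Mat D | P.trace = (d : ℝ)} := by
      apply isClosed_eq ?_ continuous_const
      unfold Matrix.trace Matrix.diag
      exact continuous_finset_sum _ fun i _ => continuous_entry i i
    have : K = {P : Mat D | P.PosSemidef} ∩ ({P | (1 - P).PosSemidef} ∩ {P | P.trace = (d : ℝ)}) := by
      ext P; simp [hK, and_assoc]
    rw [this]
    exact isClosed_psd.inter (h1.inter h2)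
  have hC : IsCompact (Set.univ.pi fun _ : Fin D => Set.univ.pi fun _ : Fin D => Set.Icc (-1:ℝ) 1) :=
    isCompact_univ_pi fun _ => isCompact_univ_pi fun _ => isCompact_Icc
  have hsub : K ⊆ Set.univ.pi fun _ : Fin D => Set.univ.pi fun _ : Fin D => Set.Icc (-1:ℝ) 1 := by
    intro P hP
    intro i _
    intro j _
    have := entry_bound hP.1 hP.2.1 i j
    rw [abs_le] at this
    exact ⟨this.1, this.2⟩
  have hKcompact : IsCompact K := hC.of_isClosed_subset hKclosed hsub
  have hKne : K.Nonempty := by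
    refine ⟨Matrix.diagonal (fun _ => (d : ℝ) / D), ?_, ?_, ?_⟩
    · exact Matrix.PosSemidef.diagonal (fun i => by
        simp only [Pi.zero_apply]
        positivity)
    · rw [show (1 : Mat D) - Matrix.diagonal (fun _ => (d : ℝ) / D)
        = Matrix.diagonal (fun _ => 1 - (d : ℝ) / D) by
          rw [← Matrix.diagonal_one, ← Matrix.diagonal_sub]]
      refine Matrix.PosSemidef.diagonal (fun i => ?_)
      simp only [Pi.zero_apply]
      have hD : (0:ℝ) < D := by exact_mod_cast hd0.trans hdD
      have : (d : ℝ) / D ≤ 1 := by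
        rw [div_le_one hD]; exact_mod_cast hdD.le
      linarith
    · rw [Matrix.trace_diagonal]
      have hD : (D:ℝ) ≠ 0 := by
        have : (0:ℝ) < D := by exact_mod_cast hd0.trans hdD
        exact this.ne'
      rw [Finset.sum_const, Finset.card_univ, Fintype.card_fin, nsmul_eq_mul]
      field_simp
  obtain ⟨Pstar, hPstarK, hmin⟩ := hKcompact.exists_isMinOn hKne (continuous_obj X).continuousOn
  refine ⟨Pstar, hPstarK.1, hPstarK.2.1, hPstarK.2.2, ?_⟩
  intro P hP htr
  obtain ⟨P', h1, h2, h3, h4⟩ := part1 P hP htr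
  have hP'K : P' ∈ K := ⟨h1, h2, h3⟩
  exact le_trans (hmin hP'K) h4
end

section
/- Let λ_1 ≥ λ_2 ≥ ... ≥ λ_D ≥ 0 be reals with Σ_{j=1}^D λ_j = d where 0 ≤ d ≤ D. Let i⋆ be the smallest positive integer with Σ_{j=1}^{i⋆} λ_j ≤ i⋆. Define λ′_i = 1 for i < i⋆, λ′_{i⋆} = 1 − i⋆ + Σ_{j=1}^{i⋆} λ_j, and λ′_i = λ_i for i > i⋆. Then for every i: 0 ≤ λ′_i ≤ 1, Σ_{i=1}^D λ′_i = d, and (1 − λ′_i)² ≤ (1 − λ_i)². -/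
lemma card_filter_lt_aux (D k : ℕ) (h : k ≤ D) :
    (Finset.univ.filter fun j : Fin D => (j:ℕ) < k).card = k := by
  have : (Finset.univ.filter fun j : Fin D => (j:ℕ) < k)
      = Finset.map (Fin.castLEEmb h) Finset.univ := by
    ext j
    simp [Fin.castLEEmb, Fin.ext_iff]
    constructor
    · intro hj; exact ⟨⟨j, hj⟩, rfl⟩
    · rintro ⟨a, ha⟩; rw [← ha]; exact a.2
  rw [this]; simp

/-- water-filling on eigenvalues.  Let
`λ_1 ≥ … ≥ λ_D ≥ 0` with `Σ λ_j = d`, `0 ≤ d ≤ D`.  Let `i⋆` be the smallest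
positive integer with `Σ_{j ≤ i⋆} λ_j ≤ i⋆`.  Define `λ'_i = 1` for `i < i⋆`,
`λ'_{i⋆} = 1 − i⋆ + Σ_{j ≤ i⋆} λ_j`, and `λ'_i = λ_i` for `i > i⋆`.  Then
`0 ≤ λ'_i ≤ 1` for all `i`, `Σ λ'_i = d`, and `(1 − λ'_i)² ≤ (1 − λ_i)²`.
(Indices `1, …, D` are represented by `i : Fin D` via `i.val + 1`.) -/
theorem water_filling_eigenvalue_facts
    (D d : ℕ) (hd : d ≤ D) (l : Fin D → ℝ)
    (hmono : ∀ i j : Fin D, i ≤ j → l j ≤ l i)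
    (hnonneg : ∀ i, 0 ≤ l i)
    (hsum : (∑ j, l j) = (d : ℝ))
    (istar : ℕ) (h1 : 1 ≤ istar) (hD : istar ≤ D)
    (hle : (∑ j ∈ Finset.univ.filter fun j : Fin D => (j : ℕ) < istar, l j)
        ≤ (istar : ℝ))
    (hmin : ∀ k : ℕ, 1 ≤ k → k < istar →
      ¬ ((∑ j ∈ Finset.univ.filter fun j : Fin D => (j : ℕ) < k, l j)
          ≤ (k : ℝ))) :
    (∀ i : Fin D,
        0 ≤ (if (i : ℕ) + 1 < istar then (1 : ℝ)
            else if (i : ℕ) + 1 = istar then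
              1 - istar +
                ∑ j ∈ Finset.univ.filter fun j : Fin D => (j : ℕ) < istar, l j
            else l i) ∧
        (if (i : ℕ) + 1 < istar then (1 : ℝ)
            else if (i : ℕ) + 1 = istar then
              1 - istar +
                ∑ j ∈ Finset.univ.filter fun j : Fin D => (j : ℕ) < istar, l j
            else l i) ≤ 1) ∧
    (∑ i : Fin D, (if (i : ℕ) + 1 < istar then (1 : ℝ)
        else if (i : ℕ) + 1 = istar then
          1 - istar +
            ∑ j ∈ Finset.univ.filter fun j : Fin D => (j : ℕ) < istar, l j
        else l i)) = (d : ℝ) ∧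
    ∀ i : Fin D,
      (1 - (if (i : ℕ) + 1 < istar then (1 : ℝ)
          else if (i : ℕ) + 1 = istar then
            1 - istar +
              ∑ j ∈ Finset.univ.filter fun j : Fin D => (j : ℕ) < istar, l j
          else l i)) ^ 2 ≤ (1 - l i) ^ 2 := by
  set S := ∑ j ∈ Finset.univ.filter fun j : Fin D => (j : ℕ) < istar, l j with hSdef
  have hi0lt : istar - 1 < D := by omega
  set i0 : Fin D := ⟨istar - 1, hi0lt⟩ with hi0
  -- decomposition of the filter set
  have hnotmem : i0 ∉ Finset.univ.filter fun j : Fin D => (j:ℕ) < istar - 1 := by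
    simp [hi0]
  have hsplit : (Finset.univ.filter fun j : Fin D => (j:ℕ) < istar)
      = insert i0 (Finset.univ.filter fun j : Fin D => (j:ℕ) < istar - 1) := by
    ext j
    simp [hi0, Fin.ext_iff]
    omega
  have hScount : (Finset.univ.filter fun j : Fin D => (j:ℕ) < istar - 1).card
      = istar - 1 := card_filter_lt_aux D (istar - 1) (by omega)
  have hSsplit : S = l i0 + ∑ j ∈ Finset.univ.filter fun j : Fin D => (j:ℕ) < istar - 1, l j := by
    rw [hSdef, hsplit, Finset.sum_insert hnotmem]
  -- lower bound on the partial sum before istar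
  have hS' : (istar : ℝ) - 1 ≤ ∑ j ∈ Finset.univ.filter fun j : Fin D => (j:ℕ) < istar - 1, l j := by
    rcases Nat.eq_or_lt_of_le h1 with h | h
    · have : (Finset.univ.filter fun j : Fin D => (j:ℕ) < istar - 1) = ∅ := by
        ext j; simp; omega
      rw [this]
      simp [← h]
    · have := hmin (istar - 1) (by omega) (by omega)
      push_neg at this
      have hc : ((istar - 1 : ℕ) : ℝ) = (istar : ℝ) - 1 := by
        push_cast [Nat.cast_sub h1]; ring
      linarith [this, hc ▸ this]
  have hSlb : (istar : ℝ) - 1 + l i0 ≤ S := by rw [hSsplit]; linarith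
  -- upper bound l i ≤ 1 for i.val ≥ istar - 1
  have hub : ∀ i : Fin D, istar - 1 ≤ (i : ℕ) → l i ≤ 1 := by
    intro i hi
    have hsmul : (Finset.univ.filter fun j : Fin D => (j:ℕ) < istar).card • l i
        ≤ ∑ j ∈ Finset.univ.filter fun j : Fin D => (j:ℕ) < istar, l j := by
      apply Finset.card_nsmul_le_sum
      intro j hj
      apply hmono
      simp at hj
      exact Fin.le_def.mpr (by omega)
    rw [card_filter_lt_aux D istar hD] at hsmul
    rw [nsmul_eq_mul] at hsmul
    have hip : (0:ℝ) < istar := by positivity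
    nlinarith [hle]
  -- value of λ' at i0
  have hval0 : (if (i0 : ℕ) + 1 < istar then (1 : ℝ)
      else if (i0 : ℕ) + 1 = istar then 1 - istar + S else l i0) = 1 - istar + S := by
    have : (i0 : ℕ) + 1 = istar := by simp [hi0]; omega
    simp [this]
  refine ⟨?_, ?_, ?_⟩
  · intro i
    by_cases hlt : (i : ℕ) + 1 < istar
    · simp [hlt]
    by_cases heq : (i : ℕ) + 1 = istar
    · simp [hlt, heq]
      constructor
      · have := hnonneg i0; linarith
      · linarith
    · simp [hlt, heq]
      refine ⟨hnonneg i, hub i (by omega)⟩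
  · -- sum
    rw [← Finset.sum_filter_add_sum_filter_not Finset.univ (fun i : Fin D => (i:ℕ) < istar)]
    have hA : (∑ i ∈ Finset.univ.filter fun i : Fin D => (i:ℕ) < istar,
        (if (i : ℕ) + 1 < istar then (1 : ℝ)
          else if (i : ℕ) + 1 = istar then 1 - istar + S else l i)) = S := by
      rw [hsplit, Finset.sum_insert hnotmem, hval0]
      have hones : (∑ i ∈ Finset.univ.filter fun i : Fin D => (i:ℕ) < istar - 1,
          (if (i : ℕ) + 1 < istar then (1 : ℝ)
            else if (i : ℕ) + 1 = istar then 1 - istar + S else l i))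
          = (istar : ℝ) - 1 := by
        have hcongr : ∀ i ∈ Finset.univ.filter fun i : Fin D => (i:ℕ) < istar - 1,
            (if (i : ℕ) + 1 < istar then (1 : ℝ)
              else if (i : ℕ) + 1 = istar then 1 - istar + S else l i) = 1 := by
          intro i hi
          simp at hi
          have : (i : ℕ) + 1 < istar := by omega
          simp [this]
        rw [Finset.sum_congr rfl hcongr]
        rw [Finset.sum_const, hScount, nsmul_eq_mul, mul_one]
        push_cast [Nat.cast_sub h1]; ring
      rw [hones]; ring
    have hB : (∑ i ∈ Finset.univ.filter fun i : Fin D => ¬ ((i:ℕ) < istar),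
        (if (i : ℕ) + 1 < istar then (1 : ℝ)
          else if (i : ℕ) + 1 = istar then 1 - istar + S else l i))
        = ∑ i ∈ Finset.univ.filter fun i : Fin D => ¬ ((i:ℕ) < istar), l i := by
      apply Finset.sum_congr rfl
      intro i hi
      simp at hi
      have h2 : ¬ ((i : ℕ) + 1 < istar) := by omega
      have h3 : ¬ ((i : ℕ) + 1 = istar) := by omega
      simp [h2, h3]
    rw [hA, hB, ← hsum, hSdef,
      ← Finset.sum_filter_add_sum_filter_not Finset.univ (fun i : Fin D => (i:ℕ) < istar) l]
  · intro i
    by_cases hlt : (i : ℕ) + 1 < istar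
    · simp [hlt]; positivity
    by_cases heq : (i : ℕ) + 1 = istar
    · simp [hlt, heq]
      have hi0eq : i = i0 := by
        apply Fin.ext; simp [hi0]; omega
      have hli : l i ≤ 1 := hub i (by omega)
      have h1' : 1 - (1 - (istar:ℝ) + S) ≤ 1 - l i := by
        rw [hi0eq]; linarith
      have h2' : 0 ≤ 1 - (1 - (istar:ℝ) + S) := by linarith
      nlinarith
    · simp [hlt, heq]
end
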